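/- The group Γ_12, i.e. the cyclically presented group with 12 generators x_0, …, x_11 and relators x_i x_{i+1} x_{i+5} for 0 ≤ i < 12 (the case m = 6, with subscripts modulo 12), is isomorphic to the free product ℤ/5ℤ * ℤ * ℤ of the cyclic group of order 5 and two infinite cyclic groups. -/
import Mathlib


/-- Relators of the cyclically presented group
`Γ_{2m} = ⟨x_0, …, x_{2m-1} | x_i x_{i+1} x_{i+m-1} (0 ≤ i < 2m)⟩`, subscripts mod `2m`. -/
def gammaRels (m : ℕ) : Set (FreeGroup (ZMod (2 * m))) :=
  {r | ∃ i : ZMod (2 * m),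
    r = FreeGroup.of i * FreeGroup.of (i + 1) * FreeGroup.of (i + (m : ZMod (2 * m)) - 1)}

/-- The cyclically presented group `Γ_{2m}`. -/
abbrev Gamma (m : ℕ) := PresentedGroup (gammaRels m)

namespace G12

open Monoid Multiplicative

/-! ### Generic group identities -/

section Generic
variable {G : Type} [Group G] (a b c b' c' : G) (ha : a ^ 5 = 1)
  (hb : b * b' = 1) (hc : c * c' = 1)
include ha hb hc



lemma L0 : b*c*a*c' * (c*a^2) * (a^2*c'*b') = 1 := by
  rw [eq_inv_of_mul_eq_one_right hb, eq_inv_of_mul_eq_one_right hc, show b*c*a*c⁻¹ * (c*a^2) * (a^2*c⁻¹*b⁻¹) = (b*c) * a^5 * (b*c)⁻¹ by group, ha]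
  group
lemma L1 : c*a^2 * (c'*b') * (b*c*a^3*c') = 1 := by
  rw [eq_inv_of_mul_eq_one_right hb, eq_inv_of_mul_eq_one_right hc, show c*a^2 * (c⁻¹*b⁻¹) * (b*c*a^3*c⁻¹) = c * a^5 * c⁻¹ by group, ha]; group
lemma L2 : c'*b' * (b*c*a^4*c') * (c*a) = 1 := by
  rw [eq_inv_of_mul_eq_one_right hb, eq_inv_of_mul_eq_one_right hc, show c⁻¹*b⁻¹ * (b*c*a^4*c⁻¹) * (c*a) = a^5 by group, ha]
lemma L3 : b*c*a^4*c' * (c*a^3) * (a^3*c'*b') = 1 := by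
  rw [eq_inv_of_mul_eq_one_right hb, eq_inv_of_mul_eq_one_right hc,
    show b*c*a^4*c⁻¹ * (c*a^3) * (a^3*c⁻¹*b⁻¹) = (b*c) * (a^5*a^5) * (b*c)⁻¹ by group, ha]
  group
lemma L4 : c*a^3 * (a^2*c'*b') * b = 1 := by
  rw [eq_inv_of_mul_eq_one_right hb, eq_inv_of_mul_eq_one_right hc, show c*a^3 * (a^2*c⁻¹*b⁻¹) * b = c * a^5 * c⁻¹ by group, ha]; group
lemma L5 : a^2*c'*b' * (b*c*a^3*c') * c = 1 := by
  rw [eq_inv_of_mul_eq_one_right hb, eq_inv_of_mul_eq_one_right hc, show a^2*c⁻¹*b⁻¹ * (b*c*a^3*c⁻¹) * c = a^5 by group, ha]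
lemma L6 : b*c*a^3*c' * (c*a) * (a*c'*b') = 1 := by
  rw [eq_inv_of_mul_eq_one_right hb, eq_inv_of_mul_eq_one_right hc, show b*c*a^3*c⁻¹ * (c*a) * (a*c⁻¹*b⁻¹) = (b*c) * a^5 * (b*c)⁻¹ by group, ha]
  group
lemma L7 : c*a * (a^3*c'*b') * (b*c*a*c') = 1 := by
  rw [eq_inv_of_mul_eq_one_right hb, eq_inv_of_mul_eq_one_right hc, show c*a * (a^3*c⁻¹*b⁻¹) * (b*c*a*c⁻¹) = c * a^5 * c⁻¹ by group, ha]; group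
lemma L8 : a^3*c'*b' * b * (c*a^2) = 1 := by
  rw [eq_inv_of_mul_eq_one_right hb, eq_inv_of_mul_eq_one_right hc, show a^3*c⁻¹*b⁻¹ * b * (c*a^2) = a^5 by group, ha]
lemma L9 : b * c * (c'*b') = (1 : G) := by
  rw [eq_inv_of_mul_eq_one_right hb, eq_inv_of_mul_eq_one_right hc]; group
lemma L10 : c * (a*c'*b') * (b*c*a^4*c') = 1 := by
  rw [eq_inv_of_mul_eq_one_right hb, eq_inv_of_mul_eq_one_right hc, show c * (a*c⁻¹*b⁻¹) * (b*c*a^4*c⁻¹) = c * a^5 * c⁻¹ by group, ha]; group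
lemma L11 : a*c'*b' * (b*c*a*c') * (c*a^3) = 1 := by
  rw [eq_inv_of_mul_eq_one_right hb, eq_inv_of_mul_eq_one_right hc, show a*c⁻¹*b⁻¹ * (b*c*a*c⁻¹) * (c*a^3) = a^5 by group, ha]

lemma Ca : a*c'*b' * b * c = a := by
  rw [eq_inv_of_mul_eq_one_right hb, eq_inv_of_mul_eq_one_right hc]; group

end Generic

private lemma solveR {G : Type*} [Group G] {x y z : G} (h : x * y * z = 1) :
    z = y⁻¹ * x⁻¹ := by
  rw [show y⁻¹ * x⁻¹ = (x*y)⁻¹ * 1 by group, ← h]; group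

private lemma solveL {G : Type*} [Group G] {x y z : G} (h : x * y * z = 1) :
    x = z⁻¹ * y⁻¹ := by
  rw [show z⁻¹ * y⁻¹ = 1 * (y*z)⁻¹ by group, ← h]; group

/-! ### The target group -/

abbrev T := Monoid.Coprod (Multiplicative (ZMod 5))
    (Monoid.Coprod (Multiplicative ℤ) (Multiplicative ℤ))

def a : T := Coprod.inl (ofAdd (1 : ZMod 5))
def b : T := Coprod.inr (Coprod.inl (ofAdd (1 : ℤ)))
def c : T := Coprod.inr (Coprod.inr (ofAdd (1 : ℤ)))
def b' : T := Coprod.inr (Coprod.inl (ofAdd (-1 : ℤ)))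
def c' : T := Coprod.inr (Coprod.inr (ofAdd (-1 : ℤ)))

lemma ha : a ^ 5 = 1 := by
  rw [a, ← map_pow, ← ofAdd_nsmul, show (5 • (1 : ZMod 5)) = 0 from by decide, ofAdd_zero,
    map_one]

lemma hbb : b * b' = 1 := by
  rw [b, b', ← map_mul, ← map_mul, ← ofAdd_add,
    show (1 + -1 : ℤ) = 0 by norm_num, ofAdd_zero, map_one, map_one]

lemma hcc : c * c' = 1 := by
  rw [c, c', ← map_mul, ← map_mul, ← ofAdd_add,
    show (1 + -1 : ℤ) = 0 by norm_num, ofAdd_zero, map_one, map_one]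

/-! ### Generators of `Gamma 6` and the relator lemma -/

def P : Gamma 6 := .of (9 : ZMod 12)
def Q : Gamma 6 := .of (10 : ZMod 12)
def R : Gamma 6 := .of (11 : ZMod 12)

private abbrev O (i : ZMod 12) : Gamma 6 := .of i

lemma relG (i j k : ZMod 12) (hj : i + 1 = j) (hk : i + 5 = k) :
    O i * O j * O k = 1 := by
  have h6 : i + ((6:ℕ) : ZMod (2*6)) - 1 = k := by rw [← hk]; push_cast; ring
  have hm : FreeGroup.of i * FreeGroup.of (i+1) *
      FreeGroup.of (i + ((6:ℕ) : ZMod (2*6)) - 1) ∈ gammaRels 6 := ⟨i, rfl⟩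
  have h1 := (QuotientGroup.eq_one_iff
      (N := Subgroup.normalClosure (gammaRels 6)) _).mpr (Subgroup.subset_normalClosure hm)
  rw [← hj, ← h6]
  exact h1

/-! ### Solving the presentation -/

private lemma e2 : O 2 = Q⁻¹ * P⁻¹ := solveR (relG 9 10 2 (by decide) (by decide))
private lemma e3 : O 3 = R⁻¹ * Q⁻¹ := solveR (relG 10 11 3 (by decide) (by decide))
private lemma e7 : O 7 = Q*R*P*Q := by
  have h := solveR (relG 2 3 7 (by decide) (by decide))
  rw [e2, e3] at h; rw [h]; group
private lemma e6 : O 6 = R⁻¹*Q⁻¹*P⁻¹*R⁻¹*Q⁻¹ := by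
  have h := solveL (relG 6 7 11 (by decide) (by decide))
  rw [e7] at h; rw [h, R]; group
private lemma e1 : O 1 = Q*R*P*Q*R*P*Q := by
  have h := solveL (relG 1 2 6 (by decide) (by decide))
  rw [e6, e2] at h; rw [h]; group
private lemma e5 : O 5 = R*P*Q*R := by
  have h := solveL (relG 5 6 10 (by decide) (by decide))
  rw [e6] at h; rw [h, Q]; group
private lemma e0 : O 0 = R⁻¹*Q⁻¹*P⁻¹*R⁻¹*Q⁻¹*P⁻¹*R⁻¹*Q⁻¹*P⁻¹*R⁻¹*Q⁻¹ := by
  have h := solveL (relG 0 1 5 (by decide) (by decide))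
  rw [e5, e1] at h; rw [h]; group
private lemma e4 : O 4 = P⁻¹*R⁻¹*Q⁻¹*P⁻¹*R⁻¹ := by
  have h := solveL (relG 4 5 9 (by decide) (by decide))
  rw [e5] at h; rw [h, P]; group
private lemma e8 : O 8 = R*P*Q*R*P*Q*R := by
  have h := solveR (relG 3 4 8 (by decide) (by decide))
  rw [e4, e3] at h; rw [h]; group

lemma h5 : (R*P*Q)^5 = 1 := by
  have h := relG 8 9 1 (by decide) (by decide)
  rw [show O 9 = P from rfl, e8, e1] at h
  calc (R*P*Q)^5 = R*P*Q*R*P*Q*R * P * (Q*R*P*Q*R*P*Q) := by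
        simp only [pow_succ, pow_zero, one_mul]; group
    _ = 1 := h

private lemma k0 : O 0 = P*Q*R*P := by
  rw [e0, show R⁻¹*Q⁻¹*P⁻¹*R⁻¹*Q⁻¹*P⁻¹*R⁻¹*Q⁻¹*P⁻¹*R⁻¹*Q⁻¹
      = P*Q*R*P * (Q * ((R*P*Q)^5)⁻¹ * Q⁻¹) from by
        simp only [pow_succ, pow_zero, one_mul]; group, h5]
  group
private lemma k3 : O 3 = P*Q*R*P*Q*R*P*Q*R*P*Q*R*P := by
  rw [e3, show R⁻¹*Q⁻¹
      = (P*Q) * ((R*P*Q)^5)⁻¹ * (P*Q)⁻¹ * (P*Q*R*P*Q*R*P*Q*R*P*Q*R*P) from by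
        simp only [pow_succ, pow_zero, one_mul]; group, h5]
  group
private lemma k4 : O 4 = Q*R*P*Q*R*P*Q*R*P*Q := by
  rw [e4, show P⁻¹*R⁻¹*Q⁻¹*P⁻¹*R⁻¹
      = Q*R*P*Q*R*P*Q*R*P*Q * ((R*P*Q)^5)⁻¹ from by
        simp only [pow_succ, pow_zero, one_mul]; group, h5]
  group
private lemma k6 : O 6 = P*Q*R*P*Q*R*P*Q*R*P := by
  rw [e6, show R⁻¹*Q⁻¹*P⁻¹*R⁻¹*Q⁻¹
      = P*Q*R*P*Q*R*P*Q*R*P * (Q * ((R*P*Q)^5)⁻¹ * Q⁻¹) from by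
        simp only [pow_succ, pow_zero, one_mul]; group, h5]
  group

/-! ### The homomorphism `φ : Gamma 6 →* T` -/

def t : ZMod 12 → T :=
  ![b*c*a*c', c*a^2, c'*b', b*c*a^4*c', c*a^3, a^2*c'*b',
    b*c*a^3*c', c*a, a^3*c'*b', b, c, a*c'*b']

lemma hrel : ∀ r ∈ gammaRels 6, FreeGroup.lift t r = 1 := by
  rintro r ⟨i, rfl⟩
  simp only [map_mul, FreeGroup.lift_apply_of]
  rw [show (i + ((6:ℕ) : ZMod (2*6)) - 1) = i + 5 from by push_cast; ring]
  fin_cases i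
  · exact L0 a b c b' c' ha hbb hcc
  · exact L1 a b c b' c' ha hbb hcc
  · exact L2 a b c b' c' ha hbb hcc
  · exact L3 a b c b' c' ha hbb hcc
  · exact L4 a b c b' c' ha hbb hcc
  · exact L5 a b c b' c' ha hbb hcc
  · exact L6 a b c b' c' ha hbb hcc
  · exact L7 a b c b' c' ha hbb hcc
  · exact L8 a b c b' c' ha hbb hcc
  · exact L9 a b c b' c' ha hbb hcc
  · exact L10 a b c b' c' ha hbb hcc
  · exact L11 a b c b' c' ha hbb hcc

def φ : Gamma 6 →* T := PresentedGroup.toGroup hrel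

/-! ### The homomorphism `ψ : T →* Gamma 6` -/

def A : Gamma 6 := R*P*Q

lemma hA5 : ((5:ℤ) • Additive.ofMul A) = 0 := by
  rw [← ofMul_zpow, show A ^ (5:ℤ) = A ^ (5:ℕ) from zpow_natCast A 5, A, h5]
  rfl

def ψ₁ : Multiplicative (ZMod 5) →* Gamma 6 :=
  AddMonoidHom.toMultiplicativeLeft
    (ZMod.lift 5 ⟨zmultiplesHom (Additive (Gamma 6)) (Additive.ofMul A), hA5⟩)

lemma ψ₁_apply : ψ₁ (ofAdd (1 : ZMod 5)) = A := by
  have h0 : ψ₁ (ofAdd (1 : ZMod 5)) = Additive.toMul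
      ((ZMod.lift 5 ⟨zmultiplesHom (Additive (Gamma 6)) (Additive.ofMul A), hA5⟩)
        (1 : ZMod 5)) := rfl
  rw [h0, show (1 : ZMod 5) = ((1:ℤ) : ZMod 5) by norm_num, ZMod.lift_coe]
  show Additive.toMul ((1:ℤ) • Additive.ofMul A) = A
  rw [one_zsmul]
  rfl

def ψ : T →* Gamma 6 :=
  Coprod.lift ψ₁ (Coprod.lift (zpowersHom _ P) (zpowersHom _ Q))

lemma hψa : ψ a = R*P*Q := by
  rw [a, ψ, Coprod.lift_apply_inl, ψ₁_apply, A]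
lemma hψb : ψ b = P := by
  rw [b, ψ, Coprod.lift_apply_inr, Coprod.lift_apply_inl, zpowersHom_apply]
  exact zpow_one P
lemma hψc : ψ c = Q := by
  rw [c, ψ, Coprod.lift_apply_inr, Coprod.lift_apply_inr, zpowersHom_apply]
  exact zpow_one Q
lemma hψb' : ψ b' = P⁻¹ := by
  rw [b', ψ, Coprod.lift_apply_inr, Coprod.lift_apply_inl, zpowersHom_apply]
  exact zpow_neg_one P
lemma hψc' : ψ c' = Q⁻¹ := by
  rw [c', ψ, Coprod.lift_apply_inr, Coprod.lift_apply_inr, zpowersHom_apply]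
  exact zpow_neg_one Q

/-! ### The two compositions -/

lemma comp1 : ψ.comp φ = MonoidHom.id (Gamma 6) := by
  refine PresentedGroup.ext fun x => ?_
  simp only [MonoidHom.comp_apply, MonoidHom.id_apply, φ, PresentedGroup.toGroup.of]
  fin_cases x
  · show ψ (b*c*a*c') = O 0
    simp only [map_mul, hψa, hψb, hψc, hψc']
    rw [k0]; group
  · show ψ (c*a^2) = O 1
    simp only [map_mul, map_pow, hψa, hψc]
    rw [e1]; simp only [pow_succ, pow_zero, one_mul]; group
  · show ψ (c'*b') = O 2
    simp only [map_mul, hψb', hψc']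
    rw [e2]
  · show ψ (b*c*a^4*c') = O 3
    simp only [map_mul, map_pow, hψa, hψb, hψc, hψc']
    rw [k3]; simp only [pow_succ, pow_zero, one_mul]; group
  · show ψ (c*a^3) = O 4
    simp only [map_mul, map_pow, hψa, hψc]
    rw [k4]; simp only [pow_succ, pow_zero, one_mul]; group
  · show ψ (a^2*c'*b') = O 5
    simp only [map_mul, map_pow, hψa, hψb', hψc']
    rw [e5]; simp only [pow_succ, pow_zero, one_mul]; group
  · show ψ (b*c*a^3*c') = O 6
    simp only [map_mul, map_pow, hψa, hψb, hψc, hψc']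
    rw [k6]; simp only [pow_succ, pow_zero, one_mul]; group
  · show ψ (c*a) = O 7
    simp only [map_mul, hψa, hψc]
    rw [e7]; group
  · show ψ (a^3*c'*b') = O 8
    simp only [map_mul, map_pow, hψa, hψb', hψc']
    rw [e8]; simp only [pow_succ, pow_zero, one_mul]; group
  · exact hψb
  · exact hψc
  · show ψ (a*c'*b') = O 11
    simp only [map_mul, hψa, hψb', hψc']
    rw [show O 11 = R from rfl]; group

lemma hφP : φ P = b := by
  rw [P, φ, PresentedGroup.toGroup.of]; rfl
lemma hφQ : φ Q = c := by
  rw [Q, φ, PresentedGroup.toGroup.of]; rfl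
lemma hφA : φ A = a := by
  rw [A, R, P, Q]
  simp only [map_mul, φ, PresentedGroup.toGroup.of]
  show t 11 * t 9 * t 10 = a
  show a*c'*b' * b * c = a
  exact Ca a b c b' c' ha hbb hcc

lemma comp2e : ∀ x : T, φ (ψ x) = x := by
  intro x
  induction x using Monoid.Coprod.induction_on with
  | inl m =>
    obtain ⟨k, hk⟩ := ZMod.intCast_surjective (n := 5) (Multiplicative.toAdd m)
    have hm : m = ofAdd ((k : ZMod 5)) := by rw [hk, ofAdd_toAdd]
    have h1 : ψ (Coprod.inl (ofAdd ((k : ZMod 5)))) = A ^ k := by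
      rw [ψ, Coprod.lift_apply_inl]
      show Additive.toMul
        ((ZMod.lift 5 ⟨zmultiplesHom (Additive (Gamma 6)) (Additive.ofMul A), hA5⟩)
          ((k : ZMod 5))) = A ^ k
      rw [ZMod.lift_coe]
      show Additive.toMul ((k : ℤ) • Additive.ofMul A) = A ^ k
      rw [toMul_zsmul, toMul_ofMul]
    rw [hm, h1, map_zpow, hφA, a, ← map_zpow, ← ofAdd_zsmul, zsmul_one]
  | inr n =>
    induction n using Monoid.Coprod.induction_on with
    | inl m =>
      have h1 : ψ (Coprod.inr (Coprod.inl m)) = P ^ (Multiplicative.toAdd m) := by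
        rw [ψ, Coprod.lift_apply_inr, Coprod.lift_apply_inl, zpowersHom_apply]
      rw [h1, map_zpow, hφP, b, ← map_zpow, ← map_zpow, ← ofAdd_zsmul, zsmul_one,
        Int.cast_id, ofAdd_toAdd]
    | inr m =>
      have h1 : ψ (Coprod.inr (Coprod.inr m)) = Q ^ (Multiplicative.toAdd m) := by
        rw [ψ, Coprod.lift_apply_inr, Coprod.lift_apply_inr, zpowersHom_apply]
      rw [h1, map_zpow, hφQ, c, ← map_zpow, ← map_zpow, ← ofAdd_zsmul, zsmul_one,
        Int.cast_id, ofAdd_toAdd]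
    | mul x y hx hy => simp only [map_mul, hx, hy]
  | mul x y hx hy => simp only [map_mul, hx, hy]

lemma comp2 : φ.comp ψ = MonoidHom.id T :=
  MonoidHom.ext fun x => comp2e x

end G12

/-- The group `Γ_12` (the case `m = 6`) is isomorphic to the free product
`ℤ/5ℤ * ℤ * ℤ` of the cyclic group of order 5 and two infinite cyclic groups. -/
theorem stmt12 :
    Nonempty (Gamma 6 ≃*
      Monoid.Coprod (Multiplicative (ZMod 5))
        (Monoid.Coprod (Multiplicative ℤ) (Multiplicative ℤ))) := by
  exact ⟨MonoidHom.toMulEquiv G12.φ G12.ψ G12.comp1 G12.comp2⟩
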